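/- Let X₁,…,Xₙ be i.i.d. 𝒳-valued random variables and f : 𝒳ⁿ → ℝ measurable. If f has bounded differences with constant c, i.e., f(S_y^k x) − f(S_{y'}^k x) ≤ c for all k ∈ [n], y, y' ∈ 𝒳, x ∈ 𝒳ⁿ, then E[exp(f(X) − E[f(X')])] ≤ exp(n c² / 8). -/

import Mathlib

open Real Set MeasureTheory

/-- Step 1: `p q (e^t - 1)/(q + p e^t) ≤ t/4` for `t ≥ 0`, `p ∈ [0,1]`, `q = 1 - p`. -/
lemma step1 {p : ℝ} (hp0 : 0 ≤ p) (hp1 : p ≤ 1) {t : ℝ} (ht : 0 ≤ t) :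
    p * (1 - p) * (exp t - 1) / ((1 - p) + p * exp t) ≤ t / 4 := by
  set q := 1 - p with hq
  have hq0 : 0 ≤ q := by simp [hq]; linarith
  have hD : ∀ s, 0 ≤ s → 1 ≤ q + p * exp s := by
    intro s hs
    have := one_le_exp hs
    nlinarith
  set k : ℝ → ℝ := fun s => s / 4 - p * q * (exp s - 1) / (q + p * exp s) with hk
  have hderiv : ∀ s ∈ Ici (0:ℝ), HasDerivAt k
      (1/4 - (p * q * exp s * (q + p * exp s) - p * q * (exp s - 1) * (p * exp s))
        / (q + p * exp s)^2) s := by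
    intro s hs
    have hDne : q + p * exp s ≠ 0 := by
      have := hD s hs; positivity
    have h1 : HasDerivAt (fun s => p * q * (exp s - 1)) (p * q * exp s) s := by
      simpa using (((Real.hasDerivAt_exp s).sub_const 1).const_mul (p * q))
    have h2 : HasDerivAt (fun s => q + p * exp s) (p * exp s) s := by
      simpa using (((Real.hasDerivAt_exp s).const_mul p).const_add q)
    have h3 := h1.div h2 hDne
    have h4 : HasDerivAt (fun s => s / 4) (1/4) s := by
      simpa using (hasDerivAt_id s).div_const 4
    exact h4.sub h3
  have hderiv_nonneg : ∀ s ∈ Ici (0:ℝ), 0 ≤ 1/4 -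
      (p * q * exp s * (q + p * exp s) - p * q * (exp s - 1) * (p * exp s))
        / (q + p * exp s)^2 := by
    intro s hs
    have hD1 := hD s hs
    have hDpos : (0:ℝ) < q + p * exp s := by linarith
    rw [sub_nonneg, div_le_iff₀ (by positivity)]
    have hpq : p + q = 1 := by simp [hq]
    have hexp : 0 < exp s := exp_pos s
    nlinarith [sq_nonneg (q - p * exp s), mul_nonneg (mul_nonneg hp0 hq0) hexp.le]
  have hmono : MonotoneOn k (Ici (0:ℝ)) := by
    apply monotoneOn_of_deriv_nonneg (convex_Ici 0)
    · exact fun s hs => (hderiv s hs).continuousAt.continuousWithinAt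
    · intro s hs
      rw [interior_Ici] at hs
      exact (hderiv s (Set.mem_Ici.2 (le_of_lt (Set.mem_Ioi.1 hs)))).differentiableAt.differentiableWithinAt
    · intro s hs
      rw [interior_Ici] at hs
      rw [(hderiv s (Set.mem_Ici.2 (le_of_lt (Set.mem_Ioi.1 hs)))).deriv]
      exact hderiv_nonneg s (Set.mem_Ici.2 (le_of_lt (Set.mem_Ioi.1 hs)))
  have h0 : k 0 = 0 := by simp [hk]
  have := hmono (self_mem_Ici) ht ht
  rw [h0] at this
  have : 0 ≤ t / 4 - p * q * (exp t - 1) / (q + p * exp t) := this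
  have heq : p * (1 - p) * (exp t - 1) / ((1 - p) + p * exp t)
      = p * q * (exp t - 1) / (q + p * exp t) := by rw [hq]
  linarith [this]

/-- Key Hoeffding inequality: `(1-p) e^{-pt} + p e^{(1-p)t} ≤ e^{t²/8}`. -/
lemma key_ineq {p : ℝ} (hp0 : 0 ≤ p) (hp1 : p ≤ 1) {t : ℝ} (ht : 0 ≤ t) :
    (1 - p) * exp (-p * t) + p * exp ((1 - p) * t) ≤ exp (t ^ 2 / 8) := by
  set q := 1 - p with hq
  have hq0 : 0 ≤ q := by simp [hq]; linarith
  set F : ℝ → ℝ := fun s => q * exp (-p * s) + p * exp (q * s) with hF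
  have hFeq : ∀ s, F s = exp (-p * s) * (q + p * exp s) := by
    intro s
    simp only [hF]
    have h : exp (q * s) = exp (-p * s) * exp s := by
      rw [← Real.exp_add]; congr 1; ring
    rw [h]; ring
  have hFpos : ∀ s, 0 < F s := by
    intro s
    rw [hFeq]
    have h1 : (0:ℝ) < q + p * exp s := by
      rcases lt_or_eq_of_le hp0 with h | h
      · have := exp_pos s; nlinarith
      · simp [← h, hq]
    positivity
  have hFderiv : ∀ s, HasDerivAt F (q * (-p * exp (-p * s)) + p * (q * exp (q * s))) s := by
    intro s
    have h1 : HasDerivAt (fun s => q * exp (-p * s)) (q * (exp (-p * s) * (-p * 1))) s :=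
      (((hasDerivAt_id s).const_mul (-p)).exp).const_mul q
    have h2 : HasDerivAt (fun s => p * exp (q * s)) (p * (exp (q * s) * (q * 1))) s :=
      (((hasDerivAt_id s).const_mul q).exp).const_mul p
    exact (h1.add h2).congr_deriv (by ring)
  set G : ℝ → ℝ := fun s => s ^ 2 / 8 - log (F s) with hG
  have hGderiv : ∀ s, HasDerivAt G
      (s / 4 - (q * (-p * exp (-p * s)) + p * (q * exp (q * s))) / F s) s := by
    intro s
    have h1 : HasDerivAt (fun s : ℝ => s ^ 2 / 8) (s / 4) s := by
      have := (hasDerivAt_pow 2 s).div_const 8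
      simpa using this.congr_deriv (by ring)
    have h2 := (hFderiv s).log (ne_of_gt (hFpos s))
    exact h1.sub h2
  have hGmono : MonotoneOn G (Ici (0:ℝ)) := by
    apply monotoneOn_of_deriv_nonneg (convex_Ici 0)
    · exact fun s _ => (hGderiv s).continuousAt.continuousWithinAt
    · intro s hs
      exact (hGderiv s).differentiableAt.differentiableWithinAt
    · intro s hs
      rw [interior_Ici] at hs
      rw [(hGderiv s).deriv]
      -- show F'/F = p q (e^s - 1)/(q + p e^s) ≤ s/4
      have hs0 : (0:ℝ) ≤ s := hs.le
      have key := step1 hp0 hp1 hs0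
      have hDpos : (0:ℝ) < q + p * exp s := by
        have h1 := hFpos s; rw [hFeq] at h1
        have := exp_pos (-p * s)
        nlinarith
      have hfrac : (q * (-p * exp (-p * s)) + p * (q * exp (q * s))) / F s
          = p * q * (exp s - 1) / (q + p * exp s) := by
        rw [hFeq]
        have hne : exp (-p * s) ≠ 0 := (exp_pos _).ne'
        have hqs : exp (q * s) = exp (-p*s) * exp s := by
          rw [← Real.exp_add]; congr 1; rw [hq]; ring
        rw [hqs]
        field_simp
        ring
      rw [hfrac]
      rw [← hq] at key
      linarith
  have hG0 : G 0 = 0 := by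
    simp [hG, hF, hq]
  have := hGmono self_mem_Ici ht ht
  rw [hG0] at this
  have hlog : log (F t) ≤ t ^ 2 / 8 := by simp only [hG] at this; linarith
  calc (1 - p) * exp (-p * t) + p * exp ((1 - p) * t) = F t := by rw [hF, hq]
    _ = exp (log (F t)) := (exp_log (hFpos t)).symm
    _ ≤ exp (t ^ 2 / 8) := exp_le_exp.2 hlog

section helpers
variable {𝒳 : Type*} [MeasurableSpace 𝒳]

lemma integrable_of_abs_le {μ : Measure 𝒳} [IsFiniteMeasure μ] {f : 𝒳 → ℝ}
    (hf : AEStronglyMeasurable f μ) {B : ℝ} (h : ∀ x, |f x| ≤ B) : Integrable f μ :=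
  (integrable_const B).mono' hf (Filter.Eventually.of_forall (by simpa using h))

lemma abs_int_le {μ : Measure 𝒳} [IsProbabilityMeasure μ] {f : 𝒳 → ℝ}
    (hf : AEStronglyMeasurable f μ) {B : ℝ} (h : ∀ x, |f x| ≤ B) : |∫ x, f x ∂μ| ≤ B := by
  calc |∫ x, f x ∂μ| = ‖∫ x, f x ∂μ‖ := (Real.norm_eq_abs _).symm
    _ ≤ ∫ x, ‖f x‖ ∂μ := norm_integral_le_integral_norm f
    _ ≤ ∫ _x, B ∂μ := by
        apply integral_mono _ (integrable_const B) (fun x => by simpa using h x)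
        exact (integrable_of_abs_le hf h).norm
    _ = B := by simp

/-- Hoeffding's lemma (integrated form): mean-zero `φ` with oscillation `≤ c`. -/
lemma hoeffding_lemma (μ : Measure 𝒳) [IsProbabilityMeasure μ] [Nonempty 𝒳]
    (φ : 𝒳 → ℝ) (hφ : Measurable φ) {B : ℝ} (hB : ∀ y, |φ y| ≤ B)
    (hmean : ∫ y, φ y ∂μ = 0) {c : ℝ} (hc : 0 < c)
    (hdiff : ∀ y y', φ y - φ y' ≤ c) :
    ∫ y, Real.exp (φ y) ∂μ ≤ Real.exp (c ^ 2 / 8) := by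
  have hne : (Set.range φ).Nonempty := Set.range_nonempty φ
  have hbdd : BddBelow (Set.range φ) := ⟨-B, by rintro _ ⟨y, rfl⟩; have := hB y; cases abs_le.1 this; linarith⟩
  set a := sInf (Set.range φ) with ha
  have ha_le : ∀ y, a ≤ φ y := fun y => csInf_le hbdd (Set.mem_range_self y)
  have hle_b : ∀ y, φ y ≤ a + c := by
    intro y
    have : φ y - c ≤ a := le_csInf hne (by rintro _ ⟨y', rfl⟩; linarith [hdiff y y'])
    linarith
  have hint : Integrable φ μ := integrable_of_abs_le hφ.aestronglyMeasurable hB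
  have ha0 : a ≤ 0 := by
    have : ∫ _y, a ∂μ ≤ ∫ y, φ y ∂μ :=
      integral_mono (integrable_const a) hint ha_le
    simpa [hmean] using this
  have hac0 : 0 ≤ a + c := by
    have : ∫ y, φ y ∂μ ≤ ∫ _y, a + c ∂μ :=
      integral_mono hint (integrable_const (a + c)) hle_b
    simpa [hmean] using this
  set α : ℝ := (Real.exp (a + c) - Real.exp a) / c with hα
  set β : ℝ := ((a + c) * Real.exp a - a * Real.exp (a + c)) / c with hβ
  have hpt : ∀ y, Real.exp (φ y) ≤ α * φ y + β := by
    intro y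
    have hcne : c ≠ 0 := hc.ne'
    have h1 : 0 ≤ (a + c - φ y) / c := div_nonneg (by linarith [hle_b y]) hc.le
    have h2 : 0 ≤ (φ y - a) / c := div_nonneg (by linarith [ha_le y]) hc.le
    have h3 : (a + c - φ y) / c + (φ y - a) / c = 1 := by field_simp; ring
    have := convexOn_exp.2 (Set.mem_univ a) (Set.mem_univ (a + c)) h1 h2 h3
    have harg : ((a + c - φ y) / c) • a + ((φ y - a) / c) • (a + c) = φ y := by
      rw [smul_eq_mul, smul_eq_mul]; field_simp; ring
    rw [harg] at this
    calc Real.exp (φ y) ≤ ((a + c - φ y) / c) • Real.exp a + ((φ y - a) / c) • Real.exp (a + c) := this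
      _ = α * φ y + β := by simp only [smul_eq_mul, hα, hβ]; field_simp; ring
  have hintexp : Integrable (fun y => Real.exp (φ y)) μ := by
    apply integrable_of_abs_le (hφ.exp).aestronglyMeasurable (B := Real.exp B)
    intro x
    rw [abs_of_pos (exp_pos _)]
    exact exp_le_exp.2 (le_of_abs_le (hB x))
  have hintaff : Integrable (fun y => α * φ y + β) μ := (hint.const_mul α).add (integrable_const β)
  have h1 : ∫ y, Real.exp (φ y) ∂μ ≤ ∫ y, α * φ y + β ∂μ :=
    integral_mono hintexp hintaff hpt
  have h2 : ∫ y, α * φ y + β ∂μ = β := by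
    rw [integral_add (hint.const_mul α) (integrable_const β)]
    have : ∫ y, α * φ y ∂μ = α * ∫ y, φ y ∂μ := by
      simpa [smul_eq_mul] using integral_smul α φ (μ := μ)
    rw [this, hmean]
    simp
  -- key inequality
  set p : ℝ := -a / c with hp
  have hp0 : 0 ≤ p := div_nonneg (by linarith) hc.le
  have hp1 : p ≤ 1 := by rw [hp, div_le_one hc]; linarith
  have hk := key_ineq hp0 hp1 hc.le
  have e1 : -p * c = a := by rw [hp]; field_simp
  have e2 : (1 - p) * c = a + c := by rw [hp]; field_simp; ring
  rw [e1, e2] at hk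
  have hβeq : β = (1 - p) * Real.exp a + p * Real.exp (a + c) := by
    rw [hβ, hp]; field_simp; ring
  linarith [hβeq ▸ hk]

/-- Oscillation bound from bounded differences. -/
lemma osc_bound : ∀ (n : ℕ) (f : (Fin n → 𝒳) → ℝ) (c : ℝ),
    (∀ (k : Fin n) (y y' : 𝒳) (x : Fin n → 𝒳),
      f (Function.update x k y) - f (Function.update x k y') ≤ c) →
    ∀ x x', f x - f x' ≤ n * c := by
  intro n
  induction n with
  | zero =>
    intro f c _ x x'
    have : x = x' := Subsingleton.elim x x'
    simp [this]
  | succ n ih =>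
    intro f c hbd x x'
    have h1 : f x - f (Function.update x 0 (x' 0)) ≤ c := by
      have := hbd 0 (x 0) (x' 0) x
      rwa [Function.update_eq_self] at this
    have h2 : f (Function.update x 0 (x' 0)) - f x' ≤ n * c := by
      have key := ih (fun y => f (Fin.cons (x' 0) y)) c ?_ (Fin.tail x) (Fin.tail x')
      · have e1 : Function.update x 0 (x' 0) = Fin.cons (x' 0) (Fin.tail x) := by
          conv_lhs => rw [← Fin.cons_self_tail x]
          rw [Fin.update_cons_zero]
        have e2 : f x' = f (Fin.cons (x' 0) (Fin.tail x')) := by rw [Fin.cons_self_tail]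
        rw [e1, e2]
        exact key
      · intro k y y' z
        simp only [Fin.cons_update]
        exact hbd k.succ y y' (Fin.cons (x' 0) z)
    push_cast
    linarith

end helpers
lemma mcdiarmid_main {𝒳 : Type*} [MeasurableSpace 𝒳] (μ : Measure 𝒳) [IsProbabilityMeasure μ]
    [Nonempty 𝒳] (c : ℝ) (hc : 0 < c) :
    ∀ (n : ℕ) (f : (Fin n → 𝒳) → ℝ), Measurable f →
      (∀ (k : Fin n) (y y' : 𝒳) (x : Fin n → 𝒳),
        f (Function.update x k y) - f (Function.update x k y') ≤ c) →
      ∫ x, Real.exp (f x - ∫ x', f x' ∂(Measure.pi fun _ : Fin n => μ))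
          ∂(Measure.pi fun _ : Fin n => μ) ≤ Real.exp ((n : ℝ) * c ^ 2 / 8) := by
  intro n
  induction n with
  | zero =>
    intro f hf hbd
    have hconst : ∀ x : Fin 0 → 𝒳, f x = f (fun i => i.elim0) :=
      fun x => congrArg f (Subsingleton.elim _ _)
    have hint : ∫ x', f x' ∂(Measure.pi fun _ : Fin 0 => μ) = f (fun i => i.elim0) := by
      rw [show (fun x' : Fin 0 → 𝒳 => f x') = (fun _ => f (fun i => i.elim0)) from funext hconst]
      simp
    rw [hint]
    have h1 : (fun x : Fin 0 → 𝒳 => Real.exp (f x - f (fun i => i.elim0))) = fun _ => 1 := by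
      funext x; rw [hconst x]; simp
    rw [h1]
    simp
  | succ n ih =>
    intro f hf hbd
    set P := (Measure.pi fun _ : Fin (n + 1) => μ) with hP
    set Q := (Measure.pi fun _ : Fin n => μ) with hQ
    set m := ∫ x', f x' ∂P with hm
    set e := MeasurableEquiv.piFinSuccAbove (fun _ : Fin (n + 1) => 𝒳) 0 with he
    have MP : MeasurePreserving e P (μ.prod Q) :=
      measurePreserving_piFinSuccAbove (fun _ : Fin (n + 1) => μ) 0
    have hesymm : ∀ w : 𝒳 × (Fin n → 𝒳), e.symm w = Fin.cons w.1 w.2 := by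
      rintro ⟨y, x⟩
      rw [he, MeasurableEquiv.piFinSuccAbove_symm_apply]
      exact Fin.insertNth_zero' y x
    have hmap : ∀ G : (Fin (n + 1) → 𝒳) → ℝ,
        ∫ z, G z ∂P = ∫ w, G (Fin.cons w.1 w.2) ∂(μ.prod Q) := by
      intro G
      rw [← MP.integral_comp e.measurableEmbedding (fun w => G (Fin.cons w.1 w.2))]
      congr 1
      funext z
      rw [show (Fin.cons (e z).1 (e z).2 : Fin (n + 1) → 𝒳) = e.symm (e z) from
        (hesymm (e z)).symm, e.symm_apply_apply]
    -- boundedness of f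
    set x₀ : Fin (n + 1) → 𝒳 := fun _ => Classical.arbitrary 𝒳 with hx₀
    set B : ℝ := |f x₀| + ((n : ℝ) + 1) * c with hB
    have hfB : ∀ x, |f x| ≤ B := by
      intro x
      have h1 := osc_bound (n + 1) f c hbd x x₀
      have h2 := osc_bound (n + 1) f c hbd x₀ x
      push_cast at h1 h2
      have h3 := le_abs_self (f x₀)
      have h4 := neg_abs_le (f x₀)
      rw [hB]
      rw [abs_le]
      constructor <;> linarith
    have hmB : |m| ≤ B := abs_int_le hf.aestronglyMeasurable hfB
    -- cons measurability
    have hcons_eq : (fun w : 𝒳 × (Fin n → 𝒳) => (Fin.cons w.1 w.2 : Fin (n + 1) → 𝒳))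
        = ⇑e.symm := funext fun w => (hesymm w).symm
    have hconsmeas : Measurable (fun w : 𝒳 × (Fin n → 𝒳) =>
        (Fin.cons w.1 w.2 : Fin (n + 1) → 𝒳)) := by
      rw [hcons_eq]; exact e.symm.measurable
    have hconsx : ∀ x : Fin n → 𝒳, Measurable (fun y => f (Fin.cons y x)) := by
      intro x
      exact hf.comp (hconsmeas.comp (measurable_id.prodMk measurable_const))
    have hint_slice : ∀ x : Fin n → 𝒳, Integrable (fun y => f (Fin.cons y x)) μ :=
      fun x => integrable_of_abs_le (hconsx x).aestronglyMeasurable (fun y => hfB _)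
    -- g and its properties
    set g : (Fin n → 𝒳) → ℝ := fun x => ∫ y, f (Fin.cons y x) ∂μ with hg
    have hgmeas : Measurable g := by
      have hsm : StronglyMeasurable (fun w : 𝒳 × (Fin n → 𝒳) => f (Fin.cons w.1 w.2)) :=
        (hf.comp hconsmeas).stronglyMeasurable
      exact hsm.integral_prod_left'.measurable
    have hgB : ∀ x, |g x| ≤ B := fun x =>
      abs_int_le (hconsx x).aestronglyMeasurable (fun y => hfB _)
    have hgdiff : ∀ (k : Fin n) (y y' : 𝒳) (x : Fin n → 𝒳),
        g (Function.update x k y) - g (Function.update x k y') ≤ c := by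
      intro k y y' x
      have hi1 := hint_slice (Function.update x k y)
      have hi2 := hint_slice (Function.update x k y')
      rw [hg]
      rw [← integral_sub hi1 hi2]
      calc ∫ z, (f (Fin.cons z (Function.update x k y))
              - f (Fin.cons z (Function.update x k y'))) ∂μ
          ≤ ∫ _z, c ∂μ := by
            apply integral_mono (hi1.sub hi2) (integrable_const c)
            intro z
            simp only [Fin.cons_update]
            exact hbd k.succ y y' (Fin.cons z x)
        _ = c := by simp
    -- Fubini for f
    have hFint : Integrable (fun w : 𝒳 × (Fin n → 𝒳) => f (Fin.cons w.1 w.2)) (μ.prod Q) :=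
      integrable_of_abs_le (hf.comp hconsmeas).aestronglyMeasurable (fun w => hfB _)
    have hgmean : ∫ x, g x ∂Q = m := by
      rw [hm, hmap f, integral_prod_symm _ hFint]
    -- the exp integrand over the product
    have hHmeas : Measurable (fun w : 𝒳 × (Fin n → 𝒳) =>
        Real.exp (f (Fin.cons w.1 w.2) - m)) := ((hf.comp hconsmeas).sub measurable_const).exp
    have hHbd : ∀ w : 𝒳 × (Fin n → 𝒳), |Real.exp (f (Fin.cons w.1 w.2) - m)| ≤ Real.exp (B + B) := by
      intro w
      rw [abs_of_pos (Real.exp_pos _)]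
      apply Real.exp_le_exp.2
      have := hfB (Fin.cons w.1 w.2)
      rw [abs_le] at this hmB
      linarith [this.2, hmB.1]
    have hHint : Integrable (fun w : 𝒳 × (Fin n → 𝒳) =>
        Real.exp (f (Fin.cons w.1 w.2) - m)) (μ.prod Q) :=
      integrable_of_abs_le hHmeas.aestronglyMeasurable hHbd
    -- pointwise Hoeffding bound on the inner integral
    have hinner : ∀ x : Fin n → 𝒳, ∫ y, Real.exp (f (Fin.cons y x) - m) ∂μ
        ≤ Real.exp (c ^ 2 / 8) * Real.exp (g x - m) := by
      intro x
      have hφmeas : Measurable (fun y => f (Fin.cons y x) - g x) :=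
        (hconsx x).sub measurable_const
      have hφbd : ∀ y, |f (Fin.cons y x) - g x| ≤ B + B := by
        intro y
        have h1 := hfB (Fin.cons y x)
        have h2 := hgB x
        rw [abs_le] at h1 h2 ⊢
        constructor <;> [linarith [h1.1, h2.2]; linarith [h1.2, h2.1]]
      have hφmean : ∫ y, (f (Fin.cons y x) - g x) ∂μ = 0 := by
        rw [integral_sub (hint_slice x) (integrable_const _), integral_const]
        simp [hg]
      have hφdiff : ∀ y y', (f (Fin.cons y x) - g x) - (f (Fin.cons y' x) - g x) ≤ c := by
        intro y y'
        have h := hbd 0 y y' (Fin.cons y' x)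
        rw [Fin.update_cons_zero, Fin.update_cons_zero] at h
        linarith
      have key := hoeffding_lemma μ (fun y => f (Fin.cons y x) - g x) hφmeas hφbd hφmean hc hφdiff
      calc ∫ y, Real.exp (f (Fin.cons y x) - m) ∂μ
          = (∫ y, Real.exp (f (Fin.cons y x) - g x) ∂μ) * Real.exp (g x - m) := by
            rw [← integral_mul_const]
            congr 1
            funext y
            rw [← Real.exp_add]
            congr 1
            ring
        _ ≤ Real.exp (c ^ 2 / 8) * Real.exp (g x - m) :=
            mul_le_mul_of_nonneg_right key (Real.exp_pos _).le
    -- integrability of both sides of the outer comparison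
    have hΦint : Integrable (fun x => ∫ y, Real.exp (f (Fin.cons y x) - m) ∂μ) Q := by
      apply integrable_of_abs_le
        (hHmeas.stronglyMeasurable.integral_prod_left'.measurable.aestronglyMeasurable)
        (B := Real.exp (B + B))
      intro x
      exact abs_int_le (((hconsx x).sub measurable_const).exp).aestronglyMeasurable
        (fun y => hHbd (y, x))
    have hGint : Integrable (fun x => Real.exp (g x - m)) Q := by
      apply integrable_of_abs_le ((hgmeas.sub measurable_const).exp).aestronglyMeasurable
        (B := Real.exp (B + B))
      intro x
      rw [abs_of_pos (Real.exp_pos _)]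
      apply Real.exp_le_exp.2
      have := hgB x
      rw [abs_le] at this hmB
      show g x - m ≤ B + B
      linarith [this.2, hmB.1]
    -- chain everything
    have hIH := ih g hgmeas hgdiff
    rw [hgmean] at hIH
    calc ∫ x, Real.exp (f x - m) ∂P
        = ∫ w, Real.exp (f (Fin.cons w.1 w.2) - m) ∂(μ.prod Q) :=
          hmap (fun z => Real.exp (f z - m))
      _ = ∫ x, ∫ y, Real.exp (f (Fin.cons y x) - m) ∂μ ∂Q := integral_prod_symm _ hHint
      _ ≤ ∫ x, Real.exp (c ^ 2 / 8) * Real.exp (g x - m) ∂Q :=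
          integral_mono hΦint (hGint.const_mul _) hinner
      _ = Real.exp (c ^ 2 / 8) * ∫ x, Real.exp (g x - m) ∂Q := by
          rw [integral_const_mul]
      _ ≤ Real.exp (c ^ 2 / 8) * Real.exp ((n : ℝ) * c ^ 2 / 8) :=
          mul_le_mul_of_nonneg_left hIH (Real.exp_pos _).le
      _ = Real.exp (((n : ℕ) + 1 : ℝ) * c ^ 2 / 8) := by
          rw [← Real.exp_add]; congr 1; ring
      _ = Real.exp (((n + 1 : ℕ) : ℝ) * c ^ 2 / 8) := by push_cast; ring_nf

/-- Bounded differences with constant `c` implies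
`E[exp(f(X) − E[f(X')])] ≤ exp(n c² / 8)` for `X ~ μⁿ` i.i.d. -/
theorem stmt_4 {𝒳 : Type*} [MeasurableSpace 𝒳] (μ : Measure 𝒳) [IsProbabilityMeasure μ]
    (n : ℕ) (f : (Fin n → 𝒳) → ℝ) (hf : Measurable f) (c : ℝ) (hc : 0 < c)
    (hbd : ∀ (k : Fin n) (y y' : 𝒳) (x : Fin n → 𝒳),
      f (Function.update x k y) - f (Function.update x k y') ≤ c) :
    ∫ x, Real.exp (f x - ∫ x', f x' ∂(Measure.pi fun _ : Fin n => μ))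
        ∂(Measure.pi fun _ : Fin n => μ)
      ≤ Real.exp (n * c ^ 2 / 8) := by
  have hne : Nonempty 𝒳 := by
    by_contra h
    rw [not_nonempty_iff] at h
    have h2 : (Set.univ : Set 𝒳) = ∅ := Set.univ_eq_empty_iff.2 h
    have h3 := measure_univ (μ := μ)
    rw [h2, measure_empty] at h3
    exact zero_ne_one h3
  exact mcdiarmid_main μ c hc n f hf hbd
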